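/- Let H be a stringent graph with vertex set [k], let n₁,…,n_k be positive integers, and let G be the graph obtained from H by replacing each vertex j by a clique W_j of size n_j (with complete bipartite connections between W_i and W_j exactly when ij ∈ E(H)). Then every map φ: V(H) → V(G) preserving both adjacency and non-adjacency satisfies φ(j) ∈ W_j for every j ∈ [k]. -/

import Mathlib

open SimpleGraph

/-- A set `W` of vertices is homogeneous in `H` if all vertices of `W` have the same
neighborhood outside `W`. -/
def IsHomogSet {V : Type*} (H : SimpleGraph V) (W : Set V) : Prop :=
  ∀ u ∈ W, ∀ v ∈ W, ∀ x ∉ W, (H.Adj u x ↔ H.Adj v x)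

/-- A graph is stringent if it has no homogeneous set `W` with `1 < |W| ≤ |V|−1`
and no non-trivial automorphism. -/
def Stringent {V : Type*} [Fintype V] (H : SimpleGraph V) : Prop :=
  (∀ W : Set V, 1 < W.ncard → W.ncard ≤ Fintype.card V - 1 → ¬ IsHomogSet H W) ∧
  (∀ φ : H ≃g H, ∀ v, φ v = v)

/-- The blow-up of `H` where vertex `j` is replaced by a clique `W_j` on `n j`
vertices; two vertices are adjacent iff they lie in the same clique, or lie in
cliques `W_i`, `W_j` with `ij ∈ E(H)`. -/
def blowup {k : ℕ} (H : SimpleGraph (Fin k)) (n : Fin k → ℕ) :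
    SimpleGraph (Σ j : Fin k, Fin (n j)) where
  Adj x y := x ≠ y ∧ (x.1 = y.1 ∨ H.Adj x.1 y.1)
  symm := ⟨by
    rintro x y ⟨hne, h⟩
    refine ⟨hne.symm, ?_⟩
    rcases h with h | h
    · exact Or.inl h.symm
    · exact Or.inr h.symm⟩
  loopless := ⟨fun x h => h.1 rfl⟩

lemma blowup_adj {k : ℕ} (H : SimpleGraph (Fin k)) (n : Fin k → ℕ)
    (x y : Σ j : Fin k, Fin (n j)) :
    (blowup H n).Adj x y ↔ x ≠ y ∧ (x.1 = y.1 ∨ H.Adj x.1 y.1) := Iff.rfl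

/-- On two vertices, any transposition is an automorphism of any graph. -/
lemma swap_auto {H : SimpleGraph (Fin 2)} (u v : Fin 2) (huv : u ≠ v) :
    ∃ ψ : H ≃g H, ψ u ≠ u := by
  have hall : ∀ x : Fin 2, x = u ∨ x = v := by
    intro x
    have hx := x.2
    have hu := u.2
    have hv := v.2
    have hne : (u : ℕ) ≠ (v : ℕ) := fun h => huv (Fin.ext h)
    have : (x : ℕ) = (u : ℕ) ∨ (x : ℕ) = (v : ℕ) := by omega
    rcases this with h | h
    · exact Or.inl (Fin.ext h)
    · exact Or.inr (Fin.ext h)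
  refine ⟨⟨Equiv.swap u v, ?_⟩, ?_⟩
  · intro a b
    rcases hall a with rfl | rfl <;> rcases hall b with rfl | rfl <;>
      simp [Equiv.swap_apply_left, Equiv.swap_apply_right, H.adj_comm]
  · simpa [Equiv.swap_apply_left] using huv.symm

/-- A stringent graph has no pair of distinct vertices with the same neighborhoods
outside the pair. -/
lemma no_pair {k : ℕ} {H : SimpleGraph (Fin k)} (hH : Stringent H)
    {u v : Fin k} (huv : u ≠ v)
    (h : ∀ x, x ≠ u → x ≠ v → (H.Adj u x ↔ H.Adj v x)) : False := by
  have hk2 : 2 ≤ k := by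
    have : 1 < Fintype.card (Fin k) := Fintype.one_lt_card_iff_nontrivial.mpr ⟨⟨u, v, huv⟩⟩
    simp at this; omega
  by_cases hk : k = 2
  · subst hk
    obtain ⟨ψ, hψ⟩ := swap_auto (H := H) u v huv
    exact hψ (hH.2 ψ u)
  · have hk3 : 3 ≤ k := by omega
    refine hH.1 {u, v} ?_ ?_ ?_
    · rw [Set.ncard_pair huv]; norm_num
    · rw [Set.ncard_pair huv]; simp only [Fintype.card_fin]; omega
    · intro a ha b hb x hx
      simp only [Set.mem_insert_iff, Set.mem_singleton_iff] at ha hb hx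
      push_neg at hx
      rcases ha with rfl | rfl <;> rcases hb with rfl | rfl
      · rfl
      · exact h x hx.1 hx.2
      · exact (h x hx.1 hx.2).symm
      · rfl

theorem stmt18 (k : ℕ) (H : SimpleGraph (Fin k)) (hH : Stringent H)
    (n : Fin k → ℕ) (hn : ∀ j, 0 < n j)
    (φ : Fin k → Σ j : Fin k, Fin (n j))
    (hφ : ∀ u v, u ≠ v → (H.Adj u v ↔ (blowup H n).Adj (φ u) (φ v))) :
    ∀ j, (φ j).1 = j := by
  classical
  have hinj : Function.Injective φ := by
    intro u v huv'
    by_contra hne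
    refine no_pair hH hne ?_
    intro x hxu hxv
    rw [hφ u x (Ne.symm hxu), hφ v x (Ne.symm hxv), huv']
  have hψinj : Function.Injective (fun j => (φ j).1) := by
    intro u v h1
    simp only at h1
    by_contra hne
    refine no_pair hH hne ?_
    intro x hxu hxv
    rw [hφ u x (Ne.symm hxu), hφ v x (Ne.symm hxv), blowup_adj, blowup_adj]
    constructor
    · rintro ⟨-, h⟩
      exact ⟨fun he => hxv (hinj he).symm, by rwa [h1] at h⟩
    · rintro ⟨-, h⟩
      exact ⟨fun he => hxu (hinj he).symm, by rwa [← h1] at h⟩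
  have hbij : Function.Bijective (fun j => (φ j).1) :=
    Finite.injective_iff_bijective.mp hψinj
  let e : Fin k ≃ Fin k := Equiv.ofBijective _ hbij
  have he : ∀ j, e j = (φ j).1 := fun j => rfl
  have hiso : ∀ a b, H.Adj (e a) (e b) ↔ H.Adj a b := by
    intro a b
    by_cases hab : a = b
    · subst hab; simp
    · rw [he, he, hφ a b hab, blowup_adj]
      constructor
      · intro h
        exact ⟨fun he' => hab (hinj he'), Or.inr h⟩
      · rintro ⟨hne', h | h⟩
        · exact absurd (hψinj h) hab
        · exact h
  let ψ : H ≃g H := ⟨e, hiso _ _⟩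
  intro j
  have := hH.2 ψ j
  simpa [ψ, he] using this
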